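/- Let E be an n × n max-plus idempotent matrix with all diagonal entries equal to 0. Then E has tropical rank strictly less than n if and only if there exist indices i ≠ j with E_{ij} = -E_{ji}. -/

import Mathlib

open scoped BigOperators

/-- Max-plus matrix product over ℝ. -/
noncomputable def tmul {n : ℕ} (A B : Fin n → Fin n → ℝ) : Fin n → Fin n → ℝ :=
  fun i j => ⨆ k, A i k + B k j

/-- Max-plus idempotency. -/
def IsTropIdem {n : ℕ} (A : Fin n → Fin n → ℝ) : Prop := tmul A A = A

/-- Tropical permanent. -/
noncomputable def tperm {n : ℕ} (A : Fin n → Fin n → ℝ) : ℝ :=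
  ⨆ σ : Equiv.Perm (Fin n), ∑ i, A i (σ i)

/-- The tropical permanent is attained by a unique permutation. -/
def UniqPerm {n : ℕ} (A : Fin n → Fin n → ℝ) : Prop :=
  ∃! σ : Equiv.Perm (Fin n), ∑ i, A i (σ i) = tperm A

/-- Tropical rank: the largest size of a square minor whose tropical
permanent is attained by a unique permutation. -/
noncomputable def tropRank {n : ℕ} (A : Fin n → Fin n → ℝ) : ℕ :=
  sSup {k : ℕ | ∃ r c : Fin k ↪ Fin n, UniqPerm (fun i j => A (r i) (c j))}

/-- Column space: all max-plus linear combinations of the columns. -/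
def colSpace {n : ℕ} (A : Fin n → Fin n → ℝ) : Set (Fin n → ℝ) :=
  {x | ∃ lam : Fin n → ℝ, ∀ i, x i = ⨆ j, lam j + A i j}

/-- Residuation distance δ(x,y) = max_k (x_k - y_k). -/
noncomputable def tdelta {n : ℕ} (x y : Fin n → ℝ) : ℝ := ⨆ k, (x k - y k)

/-- Residuation operator ⟨x∣y⟩ = min_k (y_k - x_k). -/
noncomputable def tresid {n : ℕ} (x y : Fin n → ℝ) : ℝ := ⨅ k, (y k - x k)

/-- Tropical Hilbert projective metric. -/
noncomputable def tHilbert {n : ℕ} (x y : Fin n → ℝ) : ℝ :=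
  (tdelta x y + tdelta y x) / 2

private lemma bdd' {ι : Type*} [Finite ι] (f : ι → ℝ) : BddAbove (Set.range f) :=
  (Set.finite_range f).bddAbove

lemma key {n : ℕ} {E : Fin n → Fin n → ℝ} (hidem : IsTropIdem E) (i k j : Fin n) :
    E i k + E k j ≤ E i j := by
  have h := congrFun (congrFun hidem i) j
  calc E i k + E k j ≤ ⨆ k, E i k + E k j := le_ciSup (f := fun k => E i k + E k j) (bdd' _) k
    _ = E i j := h

lemma sum_split {n : ℕ} {i m : Fin n} (him : i ≠ m) (g : Fin n → ℝ) :
    ∑ k, g k = g i + g m + ∑ k ∈ (Finset.univ.erase i).erase m, g k := by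
  rw [← Finset.add_sum_erase _ g (Finset.mem_univ i),
      ← Finset.add_sum_erase _ g (Finset.mem_erase.mpr ⟨him.symm, Finset.mem_univ m⟩), ← add_assoc]

section main
variable {n : ℕ} {E : Fin n → Fin n → ℝ}

lemma swapfacts (hidem : IsTropIdem E) (hdiag : ∀ i, E i i = 0)
    (σ : Equiv.Perm (Fin n)) {i : Fin n} (hi : σ i ≠ i) :
    ∑ k, E k (σ k) ≤ ∑ k, E k ((Equiv.swap i (σ i) * σ) k) ∧
    (Equiv.swap i (σ i) * σ).support.card < σ.support.card := by
  have him : i ≠ σ⁻¹ i := fun e => hi (show σ i = i by have := congrArg σ e; simpa using this)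
  have hσ'i : (Equiv.swap i (σ i) * σ) i = i := by
    simp [Equiv.Perm.mul_apply, Equiv.swap_apply_right]
  have hσ'm : (Equiv.swap i (σ i) * σ) (σ⁻¹ i) = σ i := by
    simp [Equiv.Perm.mul_apply, Equiv.swap_apply_left]
  have hrest : ∀ k, k ≠ i → k ≠ σ⁻¹ i → (Equiv.swap i (σ i) * σ) k = σ k := by
    intro k h1 h2
    rw [Equiv.Perm.mul_apply, Equiv.swap_apply_of_ne_of_ne]
    · exact fun e => h2 (by rw [← e]; simp)
    · exact fun e => h1 (σ.injective e)
  have e1 := sum_split him (fun k => E k (σ k))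
  have e2 := sum_split him (fun k => E k ((Equiv.swap i (σ i) * σ) k))
  have erest : ∑ k ∈ (Finset.univ.erase i).erase (σ⁻¹ i), E k ((Equiv.swap i (σ i) * σ) k)
      = ∑ k ∈ (Finset.univ.erase i).erase (σ⁻¹ i), E k (σ k) := by
    refine Finset.sum_congr rfl fun k hk => ?_
    simp only [Finset.mem_erase, Finset.mem_univ, and_true] at hk
    rw [hrest k hk.2 hk.1]
  have hkey := key hidem (σ⁻¹ i) i (σ i)
  have hmsig : σ (σ⁻¹ i) = i := by simp
  constructor
  · rw [e1, e2, hσ'i, hσ'm, erest, hmsig, hdiag i]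
    linarith
  · exact Equiv.Perm.card_support_swap_mul hi

lemma sum_nonpos (hidem : IsTropIdem E) (hdiag : ∀ i, E i i = 0) :
    ∀ N (σ : Equiv.Perm (Fin n)), σ.support.card ≤ N → ∑ i, E i (σ i) ≤ 0 := by
  intro N
  induction N with
  | zero =>
    intro σ h
    have : σ = 1 := Equiv.Perm.card_support_eq_zero.mp (Nat.le_zero.mp h)
    subst this; simp [hdiag]
  | succ N ih =>
    intro σ h
    by_cases h1 : σ = 1
    · subst h1; simp [hdiag]
    · have : ∃ i, σ i ≠ i := by
        by_contra hc; push_neg at hc; exact h1 (Equiv.ext hc)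
      obtain ⟨i, hi⟩ := this
      obtain ⟨hle, hcard⟩ := swapfacts hidem hdiag σ hi
      exact hle.trans (ih _ (by omega))

lemma exists_pair (hidem : IsTropIdem E) (hdiag : ∀ i, E i i = 0) :
    ∀ N (σ : Equiv.Perm (Fin n)), σ.support.card ≤ N → σ ≠ 1 → ∑ i, E i (σ i) = 0 →
    ∃ i j, i ≠ j ∧ E i j = -E j i := by
  intro N
  induction N with
  | zero =>
    intro σ h hne _
    exact absurd (Equiv.Perm.card_support_eq_zero.mp (Nat.le_zero.mp h)) hne
  | succ N ih =>
    intro σ h hne hsum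
    have : ∃ i, σ i ≠ i := by
      by_contra hc; push_neg at hc; exact hne (Equiv.ext hc)
    obtain ⟨i, hi⟩ := this
    obtain ⟨hle, hcard⟩ := swapfacts hidem hdiag σ hi
    have hle0 : ∑ k, E k ((Equiv.swap i (σ i) * σ) k) ≤ 0 :=
      sum_nonpos hidem hdiag _ _ le_rfl
    have hz : ∑ k, E k ((Equiv.swap i (σ i) * σ) k) = 0 := le_antisymm hle0 (hsum ▸ hle)
    by_cases hc : Equiv.swap i (σ i) * σ = 1
    · -- σ = swap i (σ i)
      have hσ : σ = Equiv.swap i (σ i) := by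
        have := congrArg (fun τ => Equiv.swap i (σ i) * τ) hc
        have h2 : σ = Equiv.swap i (σ i) := by simpa [← mul_assoc] using this
        exact h2
      refine ⟨i, σ i, fun e => hi e.symm, ?_⟩
      have hij : i ≠ σ i := fun e => hi e.symm
      have := sum_split hij (fun k => E k (σ k))
      rw [hsum] at this
      have hrest0 : ∑ k ∈ (Finset.univ.erase i).erase (σ i), E k (σ k) = 0 := by
        refine Finset.sum_eq_zero fun k hk => ?_
        simp only [Finset.mem_erase, Finset.mem_univ, and_true] at hk
        rw [hσ, Equiv.swap_apply_of_ne_of_ne hk.2 hk.1]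
        exact hdiag k
      have h2 : σ (σ i) = i := by rw [hσ]; simp
      rw [hrest0, h2] at this
      linarith
    · exact ih _ (by omega) hc hz
end main

section main2
variable {n : ℕ} {E : Fin n → Fin n → ℝ}

lemma tperm_eq_zero (hidem : IsTropIdem E) (hdiag : ∀ i, E i i = 0) : tperm E = 0 := by
  apply le_antisymm
  · exact ciSup_le fun σ => sum_nonpos hidem hdiag _ σ le_rfl
  · have h0 : ∑ i, E i ((1 : Equiv.Perm (Fin n)) i) = 0 := by simp [hdiag]
    calc (0:ℝ) = ∑ i, E i ((1 : Equiv.Perm (Fin n)) i) := h0.symm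
      _ ≤ tperm E := le_ciSup (f := fun σ : Equiv.Perm (Fin n) => ∑ i, E i (σ i)) (bdd' _) 1

lemma sum_swap_eq (hdiag : ∀ i, E i i = 0) {i j : Fin n} (hij : i ≠ j) :
    ∑ k, E k (Equiv.swap i j k) = E i j + E j i := by
  rw [sum_split hij (fun k => E k (Equiv.swap i j k))]
  simp only [Equiv.swap_apply_left, Equiv.swap_apply_right]
  have h0 : ∑ k ∈ (Finset.univ.erase i).erase j, E k (Equiv.swap i j k) = 0 := by
    refine Finset.sum_eq_zero fun k hk => ?_
    simp only [Finset.mem_erase, Finset.mem_univ, and_true] at hk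
    rw [Equiv.swap_apply_of_ne_of_ne hk.2 hk.1]
    exact hdiag k
  rw [h0, add_zero]

lemma uniq_iff (hidem : IsTropIdem E) (hdiag : ∀ i, E i i = 0) :
    UniqPerm E ↔ ¬ ∃ i j : Fin n, i ≠ j ∧ E i j = -E j i := by
  constructor
  · rintro ⟨σ₀, hσ₀, huniq⟩ ⟨i, j, hij, hE⟩
    have h1 : ∑ k, E k ((1 : Equiv.Perm (Fin n)) k) = tperm E := by
      simp [hdiag, tperm_eq_zero hidem hdiag]
    have h2 : ∑ k, E k (Equiv.swap i j k) = tperm E := by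
      rw [sum_swap_eq hdiag hij, tperm_eq_zero hidem hdiag, hE]; ring
    have heq : Equiv.swap i j = 1 := (huniq _ h2).trans (huniq 1 h1).symm
    have := congrFun (congrArg (fun e : Equiv.Perm (Fin n) => (e : Fin n → Fin n)) heq) i
    simp [Equiv.swap_apply_left] at this
    exact hij this.symm
  · intro hno
    refine ⟨1, by simp [hdiag, tperm_eq_zero hidem hdiag], ?_⟩
    intro σ hσ
    by_contra hne
    exact hno (exists_pair hidem hdiag _ σ le_rfl hne
      (by rw [hσ, tperm_eq_zero hidem hdiag]))

lemma uniq_minor (re ce : Equiv.Perm (Fin n))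
    (h : UniqPerm fun i j => E (re i) (ce j)) : UniqPerm E := by
  have hs : ∀ σ : Equiv.Perm (Fin n),
      ∑ i, E (re i) (ce (σ i)) = ∑ k, E k (((re.symm.trans σ).trans ce) k) :=
    fun σ => Fintype.sum_equiv re _ _ (fun i => by simp)
  have hΦ : ∀ τ : Equiv.Perm (Fin n),
      ((re.symm.trans ((re.trans τ).trans ce.symm)).trans ce) = τ := by
    intro τ; ext x; simp
  have ht : tperm (fun i j => E (re i) (ce j)) = tperm E := by
    apply le_antisymm
    · refine ciSup_le fun σ => ?_
      calc ∑ i, E (re i) (ce (σ i)) = ∑ k, E k (((re.symm.trans σ).trans ce) k) := hs σ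
        _ ≤ tperm E := le_ciSup (f := fun τ : Equiv.Perm (Fin n) => ∑ i, E i (τ i)) (bdd' _) _
    · refine ciSup_le fun τ => ?_
      have h2 := hs ((re.trans τ).trans ce.symm)
      rw [hΦ] at h2
      calc ∑ i, E i (τ i) = ∑ i, E (re i) (ce (((re.trans τ).trans ce.symm) i)) := h2.symm
        _ ≤ tperm (fun i j => E (re i) (ce j)) := le_ciSup
            (f := fun σ : Equiv.Perm (Fin n) => ∑ i, E (re i) (ce (σ i))) (bdd' _) _
  obtain ⟨σ₀, hσ₀, hu⟩ := h
  refine ⟨(re.symm.trans σ₀).trans ce, ?_, ?_⟩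
  · show ∑ i, E i ((((Equiv.symm re).trans σ₀).trans ce) i) = tperm E
    rw [← hs σ₀, ← ht]; exact hσ₀
  · intro τ hτ
    have h2 : ∑ i, E (re i) (ce (((re.trans τ).trans ce.symm) i))
        = tperm (fun i j => E (re i) (ce j)) := by
      rw [hs, hΦ, ht]; exact hτ
    have h3 := hu _ h2
    rw [← h3, hΦ]
end main2

theorem stmt1 (n : ℕ) (hn : 0 < n) (E : Fin n → Fin n → ℝ)
    (hidem : IsTropIdem E) (hdiag : ∀ i, E i i = 0) :
    tropRank E < n ↔ ∃ i j, i ≠ j ∧ E i j = -E j i := by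
  set S : Set ℕ := {k : ℕ | ∃ r c : Fin k ↪ Fin n, UniqPerm (fun i j => E (r i) (c j))} with hS
  have hbdd : BddAbove S := by
    refine ⟨n, fun k hk => ?_⟩
    obtain ⟨r, _, _⟩ := hk
    simpa using Fintype.card_le_of_embedding r
  have h0 : 0 ∈ S := by
    refine ⟨Function.Embedding.ofIsEmpty, Function.Embedding.ofIsEmpty, 1, ?_, ?_⟩
    · simp [tperm]
    · intro y _; exact Subsingleton.elim y 1
  have hrank : tropRank E = sSup S := rfl
  constructor
  · intro hlt
    by_contra hno
    have hU : UniqPerm E := (uniq_iff hidem hdiag).mpr hno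
    have hmem : n ∈ S :=
      ⟨Function.Embedding.refl _, Function.Embedding.refl _, hU⟩
    have := le_csSup hbdd hmem
    rw [hrank] at hlt; omega
  · intro hpair
    have hle : sSup S ≤ n := csSup_le ⟨0, h0⟩ (fun k hk => by
      obtain ⟨r, _, _⟩ := hk; simpa using Fintype.card_le_of_embedding r)
    rw [hrank]
    rcases Nat.lt_or_ge (sSup S) n with h | h
    · exact h
    · exfalso
      have heq : sSup S = n := le_antisymm hle h
      have hmem : sSup S ∈ S := Nat.sSup_mem ⟨0, h0⟩ hbdd
      rw [heq] at hmem
      obtain ⟨r, c, hM⟩ := hmem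
      have hrb : Function.Bijective r :=
        (Fintype.bijective_iff_injective_and_card r).mpr ⟨r.injective, rfl⟩
      have hcb : Function.Bijective c :=
        (Fintype.bijective_iff_injective_and_card c).mpr ⟨c.injective, rfl⟩
      have hU : UniqPerm E :=
        uniq_minor (Equiv.ofBijective r hrb) (Equiv.ofBijective c hcb) hM
      exact (uniq_iff hidem hdiag).mp hU hpair
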